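/- Let B be a diagonal n×n matrix with purely imaginary (or zero) diagonal entries, acting on polynomial maps f : ℂ^n × ℝ^s → ℂ^n homogeneous of degree ℓ via the homological operator (L_B f)(x,μ) = D_x f(x,μ) B x - B f(x,μ). If f is in the range of L_B, i.e. f = L_B g for some homogeneous g, then the time average lim_{T→∞} (1/T) ∫₀^T e^{Bs} f(e^{-Bs}x, μ) ds equals 0 for every (x, μ). -/

import Mathlib

open MeasureTheory Metric Set

/-- Let `B` be diagonal with purely imaginary (or zero) entries `B i`, acting on
homogeneous maps via the homological operator
`(L_B g)(x,μ) = D_x g(x,μ) Bx - B g(x,μ)`.  If `f = L_B g` for a homogeneous `g` of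
degree `ℓ`, then the time average `lim_{T→∞} (1/T) ∫₀^T e^{Bs} f(e^{-Bs}x, μ) ds`
is `0` for every `(x,μ)`. -/
theorem stmt13 (n s ℓ : ℕ) (B : Fin n → ℂ) (hB : ∀ i, (B i).re = 0)
    (g f : (Fin n → ℂ) → (Fin s → ℝ) → (Fin n → ℂ))
    (hgdiff : ∀ μ, Differentiable ℂ fun x => g x μ)
    (hghom : ∀ (c : ℂ) (x : Fin n → ℂ) (μ : Fin s → ℝ), g (c • x) μ = c ^ ℓ • g x μ)
    (hf : ∀ x μ, f x μ
      = fderiv ℂ (fun x => g x μ) x (fun j => B j * x j) - fun i => B i * g x μ i)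
    (x : Fin n → ℂ) (μ : Fin s → ℝ) :
    Filter.Tendsto (fun T : ℝ => (1 / T) •
        ∫ t in (0:ℝ)..T, fun i =>
          Complex.exp (B i * t) * f (fun j => Complex.exp (-B j * t) * x j) μ i)
      Filter.atTop (nhds 0) := by
  classical
  set y : ℝ → Fin n → ℂ := fun t j => Complex.exp (-B j * t) * x j with hy_def
  set w : ℝ → Fin n → ℂ := fun t j => B j * y t j with hw_def
  set G : ℝ → Fin n → ℂ := fun t i => Complex.exp (B i * t) * g (y t) μ i with hG_def
  set F : ℝ → Fin n → ℂ := fun t i => Complex.exp (B i * t) * f (y t) μ i with hF_def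
  have hww : ∀ t, (fun j => B j * y t j) = w t := fun t => rfl
  -- modulus of exponentials is 1
  have hexp1 : ∀ (c : ℂ) (t : ℝ), c.re = 0 → ‖Complex.exp (c * t)‖ = 1 := by
    intro c t hc
    rw [Complex.norm_exp]
    simp [Complex.mul_re, hc]
  have hexpc : ∀ c : ℂ, Continuous fun t : ℝ => Complex.exp (c * t) :=
    fun c => Complex.continuous_exp.comp (continuous_const.mul Complex.continuous_ofReal)
  -- derivative of ↑t
  have hofReal : ∀ t : ℝ, HasDerivAt (fun t : ℝ => (t : ℂ)) 1 t := by
    intro t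
    simpa using (hasDerivAt_id t).ofReal_comp
  -- derivative of y
  have hy : ∀ t, HasDerivAt y (-(w t)) t := by
    intro t
    apply hasDerivAt_pi.mpr
    intro j
    have h2 : HasDerivAt (fun t : ℝ => -B j * (t : ℂ)) (-B j * 1) t :=
      (hofReal t).const_mul (-B j)
    have h4 := h2.cexp.mul_const (x j)
    have heq : (-(w t)) j = Complex.exp (-B j * t) * (-B j * 1) * x j := by
      simp only [Pi.neg_apply, hw_def, hy_def]
      ring
    rw [heq]
    exact h4
  -- derivative of G
  have hG : ∀ t, HasDerivAt G (-(F t)) t := by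
    intro t
    have hchain : HasDerivAt (fun s => g (y s) μ)
        (fderiv ℂ (fun x => g x μ) (y t) (-(w t))) t := by
      have h := ((((hgdiff μ) (y t)).hasFDerivAt.restrictScalars ℝ)).comp_hasDerivAt t (hy t)
      exact h
    rw [map_neg] at hchain
    apply hasDerivAt_pi.mpr
    intro i
    have hchain_i : HasDerivAt (fun s => g (y s) μ i)
        ((-(fderiv ℂ (fun x => g x μ) (y t) (w t))) i) t := hasDerivAt_pi.mp hchain i
    have hexp_i : HasDerivAt (fun s : ℝ => Complex.exp (B i * (s : ℂ)))
        (Complex.exp (B i * t) * (B i * 1)) t := ((hofReal t).const_mul (B i)).cexp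
    have hmul := hexp_i.mul hchain_i
    have heq : (-(F t)) i = Complex.exp (B i * t) * (B i * 1) * g (y t) μ i
        + Complex.exp (B i * t) * ((-(fderiv ℂ (fun x => g x μ) (y t) (w t))) i) := by
      simp only [Pi.neg_apply, hF_def, hf (y t) μ, Pi.sub_apply, hww]
      ring
    rw [heq]
    exact hmul
  -- bounds
  obtain ⟨M, hM⟩ : ∃ M, ∀ v ∈ closedBall (0 : Fin n → ℂ) (‖x‖ + (‖B‖ * ‖x‖ + 1)),
      ‖g v μ‖ ≤ M :=
    (isCompact_closedBall _ _).exists_bound_of_continuousOn (hgdiff μ).continuous.continuousOn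
  have hMnonneg : 0 ≤ M := by
    have := hM 0 (by simp [mem_closedBall]; positivity)
    exact le_trans (norm_nonneg _) this
  have hynorm : ∀ t, ∀ j, ‖y t j‖ = ‖x j‖ := by
    intro t j
    simp only [hy_def, norm_mul]
    rw [hexp1 (-B j) t (by simp [hB j])]
    ring
  have hymem : ∀ t, ‖y t‖ ≤ ‖x‖ := by
    intro t
    refine (pi_norm_le_iff_of_nonneg (norm_nonneg x)).mpr fun j => ?_
    rw [hynorm t j]
    exact norm_le_pi_norm x j
  have hwnorm : ∀ t, ‖w t‖ ≤ ‖B‖ * ‖x‖ := by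
    intro t
    refine (pi_norm_le_iff_of_nonneg (by positivity)).mpr fun j => ?_
    simp only [hw_def, norm_mul]
    rw [hynorm t j]
    exact mul_le_mul (norm_le_pi_norm B j) (norm_le_pi_norm x j) (norm_nonneg _) (norm_nonneg _)
  have hymem' : ∀ t, y t ∈ closedBall (0 : Fin n → ℂ) (‖x‖ + (‖B‖ * ‖x‖ + 1)) := by
    intro t
    rw [mem_closedBall, dist_zero_right]
    have := hymem t
    nlinarith [norm_nonneg x, norm_nonneg B]
  -- bound on G
  have hGbound : ∀ t, ‖G t‖ ≤ M := by
    intro t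
    refine (pi_norm_le_iff_of_nonneg hMnonneg).mpr fun i => ?_
    have : ‖G t i‖ = ‖g (y t) μ i‖ := by
      simp only [hG_def, norm_mul, hexp1 (B i) t (hB i), one_mul]
    rw [this]
    exact le_trans (norm_le_pi_norm _ i) (hM (y t) (hymem' t))
  -- Cauchy estimate: bound on the derivative term
  have hDbound : ∀ t, ‖fderiv ℂ (fun x => g x μ) (y t) (w t)‖ ≤ M := by
    intro t
    have hφ : HasDerivAt (fun z : ℂ => g (y t + z • w t) μ)
        (fderiv ℂ (fun x => g x μ) (y t) (w t)) 0 := by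
      have hl : HasDerivAt (fun z : ℂ => y t + z • w t) (w t) 0 := by
        simpa using ((hasDerivAt_id (0 : ℂ)).smul_const (w t)).const_add (y t)
      have := ((hgdiff μ) (y t + (0 : ℂ) • w t)).hasFDerivAt.comp_hasDerivAt 0 hl
      simp only [zero_smul, add_zero] at this
      exact this
    have hd : DiffContOnCl ℂ (fun z : ℂ => g (y t + z • w t) μ) (ball 0 1) := by
      apply Differentiable.diffContOnCl
      exact fun z => ((hgdiff μ).comp
        (((differentiable_id).smul_const (w t)).const_add (y t))) z
    have hC : ∀ z ∈ sphere (0 : ℂ) 1, ‖g (y t + z • w t) μ‖ ≤ M := by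
      intro z hz
      apply hM
      rw [mem_closedBall, dist_zero_right]
      have h1 : ‖y t + z • w t‖ ≤ ‖y t‖ + ‖z • w t‖ := norm_add_le _ _
      have h2 : ‖z • w t‖ = ‖z‖ * ‖w t‖ := norm_smul _ _
      have h3 : ‖z‖ = 1 := by simpa using hz
      rw [h3, one_mul] at h2
      have := hymem t
      have := hwnorm t
      linarith
    have := Complex.norm_deriv_le_of_forall_mem_sphere_norm_le one_pos hd hC
    rwa [hφ.deriv, div_one] at this
  -- bound on F
  have hFbound : ∀ t, ‖F t‖ ≤ M + ‖B‖ * M := by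
    intro t
    refine (pi_norm_le_iff_of_nonneg (by positivity)).mpr fun i => ?_
    have hFi : ‖F t i‖ = ‖f (y t) μ i‖ := by
      simp only [hF_def, norm_mul, hexp1 (B i) t (hB i), one_mul]
    rw [hFi, hf (y t) μ]
    simp only [Pi.sub_apply, hww]
    have h1 : ‖fderiv ℂ (fun x => g x μ) (y t) (w t) i‖ ≤ M :=
      le_trans (norm_le_pi_norm _ i) (hDbound t)
    have h2 : ‖B i * g (y t) μ i‖ ≤ ‖B‖ * M := by
      rw [norm_mul]
      have hgy : ‖g (y t) μ i‖ ≤ M := le_trans (norm_le_pi_norm _ i) (hM (y t) (hymem' t))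
      exact mul_le_mul (norm_le_pi_norm B i) hgy (norm_nonneg _) (norm_nonneg _)
    calc ‖_ - _‖ ≤ _ + _ := norm_sub_le _ _
      _ ≤ M + ‖B‖ * M := add_le_add h1 h2
  -- measurability of F
  have hycont : Continuous y := by
    apply continuous_pi
    intro j
    exact (hexpc (-B j)).mul continuous_const
  have hwcont : Continuous w := by
    apply continuous_pi
    intro j
    exact continuous_const.mul ((continuous_apply j).comp hycont)
  have hFmeas : Measurable F := by
    borelize ((Fin n → ℂ) →L[ℂ] (Fin n → ℂ))
    have hA : Measurable fun t => fderiv ℂ (fun x => g x μ) (y t) :=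
      (measurable_fderiv ℂ (fun x => g x μ)).comp hycont.measurable
    have hApp : Measurable fun t => fderiv ℂ (fun x => g x μ) (y t) (w t) := by
      have hc : Continuous fun p : ((Fin n → ℂ) →L[ℂ] (Fin n → ℂ)) × (Fin n → ℂ) =>
          p.1 p.2 := isBoundedBilinearMap_apply.continuous
      exact hc.measurable.comp (hA.prodMk hwcont.measurable)
    apply measurable_pi_iff.mpr
    intro i
    have hfi : Measurable fun t => f (y t) μ i := by
      have heq : (fun t => f (y t) μ i)
          = fun t => fderiv ℂ (fun x => g x μ) (y t) (w t) i - B i * g (y t) μ i := by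
        funext t
        rw [hf (y t) μ]
        simp only [Pi.sub_apply, hww]
      rw [heq]
      exact ((measurable_pi_apply i).comp hApp).sub
        (measurable_const.mul (((continuous_apply i).comp
          ((hgdiff μ).continuous.comp hycont)).measurable))
    exact ((hexpc (B i)).measurable).mul hfi
  -- interval integrability of -F
  have hInt : ∀ T : ℝ, IntervalIntegrable (fun t => -(F t)) volume 0 T := by
    intro T
    rw [intervalIntegrable_iff]
    apply Integrable.mono' (g := fun _ => M + ‖B‖ * M)
      ((integrableOn_const_iff).mpr (Or.inr measure_Ioc_lt_top))
      (hFmeas.neg.aestronglyMeasurable.restrict)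
    filter_upwards with t
    rw [Pi.neg_apply, norm_neg]
    exact hFbound t
  -- FTC
  have hFTC : ∀ T : ℝ, (∫ t in (0:ℝ)..T, F t) = G 0 - G T := by
    intro T
    have h := intervalIntegral.integral_eq_sub_of_hasDerivAt
      (f := G) (f' := fun t => -(F t)) (fun t _ => hG t) (hInt T)
    rw [intervalIntegral.integral_neg] at h
    have h2 := neg_eq_iff_eq_neg.mp h
    rw [h2]
    abel
  -- conclude
  have key : Filter.Tendsto (fun T : ℝ => (1 / T) • (G 0 - G T))
      Filter.atTop (nhds 0) := by
    apply squeeze_zero_norm' (a := fun T : ℝ => (2 * M) / T)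
    · filter_upwards [Filter.eventually_ge_atTop (1:ℝ)] with T hT
      rw [norm_smul]
      have h1 : ‖(1:ℝ) / T‖ = 1 / T := by
        rw [Real.norm_eq_abs, abs_of_pos (by positivity)]
      rw [h1]
      have h2 : ‖G 0 - G T‖ ≤ 2 * M := by
        calc ‖G 0 - G T‖ ≤ ‖G 0‖ + ‖G T‖ := norm_sub_le _ _
          _ ≤ 2 * M := by have := hGbound 0; have := hGbound T; linarith
      rw [div_eq_mul_inv (2*M), mul_comm (2*M), ← one_div]
      exact mul_le_mul_of_nonneg_left h2 (by positivity)
    · exact Filter.Tendsto.div_atTop tendsto_const_nhds Filter.tendsto_id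
  apply key.congr'
  filter_upwards with T
  rw [← hFTC T]
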